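/- arXiv:2511.06258 — 5 statements merged into one kernel-verified Lean document; each statement's English description precedes it below -/
import Mathlib

section
/- For all natural numbers p, q, r, the multiplicity E_{p,q}^r satisfies the closed formula: E_{p,q}^r = 0 if p + q < r or r < |p - q|; E_{p,q}^r = ⌊(r - |p - q|)/2⌋ + 1 if |p - q| ≤ r and 2r ≤ p + q + |p - q|; and E_{p,q}^r = ⌊(p + q - r)/2⌋ + 1 if p + q + |p - q| < 2r and r ≤ p + q. -/
/-- The multiplicity `E_{p,q}^r`: the number of non-negative integer solutions
    (T, U, L, R) of the Diophantine system (E1):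
    T + L + R = r, L + T + U = p, R + U + T = q. -/
noncomputable def Emult (p q r : ℕ) : ℕ :=
  Set.ncard {t : ℕ × ℕ × ℕ × ℕ |
    t.1 + t.2.2.1 + t.2.2.2 = r ∧
    t.2.2.1 + t.1 + t.2.1 = p ∧
    t.2.2.2 + t.2.1 + t.1 = q}

/-- Key lemma: when `r ≤ p + q`, the solutions are parametrized by `U` ranging over
    an interval, giving an explicit count. -/
lemma Emult_key (p q r : ℕ) (h : r ≤ p + q) :
    Emult p q r = (p+q-r)/2 + 1 - max (p-r) (q-r) := by
  have hs : {t : ℕ × ℕ × ℕ × ℕ |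
      t.1 + t.2.2.1 + t.2.2.2 = r ∧
      t.2.2.1 + t.1 + t.2.1 = p ∧
      t.2.2.2 + t.2.1 + t.1 = q} =
      (fun U => (p+q-r-2*U, U, U+r-q, U+r-p)) ''
        ↑(Finset.Icc (max (p-r) (q-r)) ((p+q-r)/2)) := by
    ext ⟨T, U, L, R⟩
    simp only [Set.mem_setOf_eq, Set.mem_image, Finset.coe_Icc, Set.mem_Icc,
      Prod.mk.injEq, max_le_iff]
    constructor
    · rintro ⟨h1, h2, h3⟩
      exact ⟨U, ⟨⟨by omega, by omega⟩, by omega⟩, by omega, rfl, by omega, by omega⟩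
    · rintro ⟨u, ⟨⟨hu1, hu2⟩, hu3⟩, e1, e2, e3, e4⟩
      omega
  have hinj : Function.Injective
      (fun U : ℕ => (p+q-r-2*U, U, U+r-q, U+r-p)) := by
    intro a b hab
    simpa using congrArg (fun t : ℕ × ℕ × ℕ × ℕ => t.2.1) hab
  rw [Emult, hs, Set.ncard_image_of_injective _ hinj, Set.ncard_coe_finset,
    Nat.card_Icc]

/-- the closed formula for `E_{p,q}^r`. -/
theorem stmt_3 (p q r : ℕ) :
    (p + q < r ∨ r < ((p : ℤ) - (q : ℤ)).natAbs → Emult p q r = 0) ∧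
    (((p : ℤ) - (q : ℤ)).natAbs ≤ r ∧ 2 * r ≤ p + q + ((p : ℤ) - (q : ℤ)).natAbs →
      Emult p q r = (r - ((p : ℤ) - (q : ℤ)).natAbs) / 2 + 1) ∧
    (p + q + ((p : ℤ) - (q : ℤ)).natAbs < 2 * r ∧ r ≤ p + q →
      Emult p q r = (p + q - r) / 2 + 1) := by
  have hE0 : p + q < r → Emult p q r = 0 := by
    intro hr
    have : {t : ℕ × ℕ × ℕ × ℕ |
      t.1 + t.2.2.1 + t.2.2.2 = r ∧
      t.2.2.1 + t.1 + t.2.1 = p ∧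
      t.2.2.2 + t.2.1 + t.1 = q} = ∅ := by
      ext ⟨T, U, L, R⟩
      simp only [Set.mem_setOf_eq, Set.mem_empty_iff_false, iff_false]
      omega
    rw [Emult, this, Set.ncard_empty]
  refine ⟨?_, ?_, ?_⟩
  · rintro (hr | hr)
    · exact hE0 hr
    · have h2 : r ≤ p + q := by omega
      rw [Emult_key p q r h2]
      omega
  · rintro ⟨h1, h2⟩
    have h3 : r ≤ p + q := by omega
    rw [Emult_key p q r h3]
    omega
  · rintro ⟨h1, h2⟩
    rw [Emult_key p q r h2]
    omega
end

section
/- For all natural numbers p, q, r, the multiplicity E_{p,q}^r is positive (i.e., the system (E1) has at least one non-negative integer solution) if and only if |p - q| ≤ r ≤ p + q, that is, if and only if p, q, r can be the side lengths of a (possibly degenerate) triangle. -/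
/-- `E_{p,q}^r > 0` iff `|p - q| ≤ r ≤ p + q`. -/
theorem stmt_4 (p q r : ℕ) :
    0 < Emult p q r ↔ (|(p : ℤ) - (q : ℤ)| ≤ (r : ℤ) ∧ (r : ℤ) ≤ (p : ℤ) + (q : ℤ)) := by
  constructor
  · intro h
    obtain ⟨⟨T, U, L, R⟩, h1, h2, h3⟩ := Set.nonempty_of_ncard_ne_zero h.ne'
    simp only at h1 h2 h3
    rw [abs_le]
    omega
  · rintro ⟨h1, h2⟩
    rw [abs_le] at h1
    have hfin : ({t : ℕ × ℕ × ℕ × ℕ |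
        t.1 + t.2.2.1 + t.2.2.2 = r ∧
        t.2.2.1 + t.1 + t.2.1 = p ∧
        t.2.2.2 + t.2.1 + t.1 = q}).Finite := by
      apply Set.Finite.subset
        ((Finset.range (r+1) ×ˢ Finset.range (p+1) ×ˢ Finset.range (r+1)
          ×ˢ Finset.range (r+1)).finite_toSet)
      rintro ⟨T, U, L, R⟩ ⟨e1, e2, e3⟩
      simp only at e1 e2 e3
      simp only [Finset.coe_product, Set.mem_prod, Finset.mem_coe, Finset.mem_range]
      omega
    rw [Emult, Set.ncard_pos hfin]
    refine ⟨⟨p + q - r - 2 * (max p q - r), max p q - r,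
      (max p q - r) + r - q, (max p q - r) + r - p⟩, ?_, ?_, ?_⟩ <;>
      simp only [Set.mem_setOf_eq] <;> omega
end

section
/- For all natural numbers p, q, r, if r = p + q or r = |p - q|, then E_{p,q}^r = 1; that is, when the triangle with sides p, q, r is degenerate, the system (E1) has exactly one non-negative integer solution. -/
/-- if `r = p + q` or `r = |p - q|` then `E_{p,q}^r = 1`. -/
theorem stmt_5 (p q r : ℕ) (h : r = p + q ∨ (r : ℤ) = |(p : ℤ) - (q : ℤ)|) :
    Emult p q r = 1 := by
  have h' : r = p + q ∨ p = q + r ∨ q = p + r := by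
    rcases h with h | h
    · exact Or.inl h
    · rcases abs_cases ((p : ℤ) - (q : ℤ)) with ⟨h1, _⟩ | ⟨h1, _⟩ <;>
        rw [h1] at h <;> omega
  have key : ∃ x, {t : ℕ × ℕ × ℕ × ℕ |
      t.1 + t.2.2.1 + t.2.2.2 = r ∧
      t.2.2.1 + t.1 + t.2.1 = p ∧
      t.2.2.2 + t.2.1 + t.1 = q} = {x} := by
    rcases h' with h | h | h
    · exact ⟨(0, 0, p, q), by
        ext ⟨T, U, L, R⟩
        simp only [Set.mem_setOf_eq, Set.mem_singleton_iff, Prod.ext_iff]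
        omega⟩
    · exact ⟨(0, q, r, 0), by
        ext ⟨T, U, L, R⟩
        simp only [Set.mem_setOf_eq, Set.mem_singleton_iff, Prod.ext_iff]
        omega⟩
    · exact ⟨(0, p, 0, r), by
        ext ⟨T, U, L, R⟩
        simp only [Set.mem_setOf_eq, Set.mem_singleton_iff, Prod.ext_iff]
        omega⟩
  obtain ⟨x, hx⟩ := key
  rw [Emult, hx, Set.ncard_singleton]
end

section
/- For all natural numbers p, q, r with r ≤ p + q + |p - q|, one has the symmetry E_{p,q}^r = E_{p,q}^{p+q+|p-q|-r}; that is, the multiplicity is invariant under the reflection r ↦ p + q + |p - q| - r. -/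
/-- The reflection involution on quadruples. -/
def EmultFlip (x : ℕ × ℕ × ℕ × ℕ) : ℕ × ℕ × ℕ × ℕ :=
  match x with
  | (T, U, L, R) => (T, min L R, L + U - min L R, R + U - min L R)

lemma emultFlip_def (T U L R : ℕ) :
    EmultFlip (T, U, L, R) = (T, min L R, L + U - min L R, R + U - min L R) := rfl

lemma emultFlip_invol (T U L R : ℕ) :
    EmultFlip (EmultFlip (T, U, L, R)) = (T, U, L, R) := by
  simp only [emultFlip_def, Prod.mk.injEq, true_and]
  omega

/-- the symmetry `E_{p,q}^r = E_{p,q}^{p+q+|p-q|-r}`. -/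
theorem stmt_7 (p q r : ℕ) (h : r ≤ p + q + ((p : ℤ) - (q : ℤ)).natAbs) :
    Emult p q r = Emult p q (p + q + ((p : ℤ) - (q : ℤ)).natAbs - r) := by
  classical
  set A : Set (ℕ × ℕ × ℕ × ℕ) := {t |
    t.1 + t.2.2.1 + t.2.2.2 = r ∧
    t.2.2.1 + t.1 + t.2.1 = p ∧
    t.2.2.2 + t.2.1 + t.1 = q} with hA
  set B : Set (ℕ × ℕ × ℕ × ℕ) := {t |
    t.1 + t.2.2.1 + t.2.2.2 = p + q + ((p : ℤ) - (q : ℤ)).natAbs - r ∧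
    t.2.2.1 + t.1 + t.2.1 = p ∧
    t.2.2.2 + t.2.1 + t.1 = q} with hB
  have memA : ∀ T U L R : ℕ, ((T, U, L, R) : ℕ × ℕ × ℕ × ℕ) ∈ A ↔
      (T + L + R = r ∧ L + T + U = p ∧ R + U + T = q) := fun _ _ _ _ => Iff.rfl
  have memB : ∀ T U L R : ℕ, ((T, U, L, R) : ℕ × ℕ × ℕ × ℕ) ∈ B ↔
      (T + L + R = p + q + ((p : ℤ) - (q : ℤ)).natAbs - r ∧
        L + T + U = p ∧ R + U + T = q) := fun _ _ _ _ => Iff.rfl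
  have hmapsA : ∀ x ∈ A, EmultFlip x ∈ B := by
    rintro ⟨T, U, L, R⟩ hx
    rw [memA] at hx
    rw [emultFlip_def, memB]
    rcases le_total L R with hLR | hLR <;>
      refine ⟨?_, ?_, ?_⟩ <;> omega
  have hmapsB : ∀ x ∈ B, EmultFlip x ∈ A := by
    rintro ⟨T, U, L, R⟩ hx
    rw [memB] at hx
    rw [emultFlip_def, memA]
    rcases le_total L R with hLR | hLR <;>
      refine ⟨?_, ?_, ?_⟩ <;> omega
  have himg : EmultFlip '' A = B := by
    apply Set.Subset.antisymm
    · rintro y ⟨x, hx, rfl⟩; exact hmapsA x hx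
    · rintro ⟨T, U, L, R⟩ hy
      exact ⟨EmultFlip (T, U, L, R), hmapsB _ hy, emultFlip_invol T U L R⟩
  have hinj : Set.InjOn EmultFlip A := by
    rintro ⟨T, U, L, R⟩ _ ⟨T', U', L', R'⟩ _ hxy
    rw [← emultFlip_invol T U L R, ← emultFlip_invol T' U' L' R', hxy]
  have e1 : Emult p q r = A.ncard := rfl
  have e2 : Emult p q (p + q + ((p : ℤ) - (q : ℤ)).natAbs - r) = B.ncard := rfl
  rw [e1, e2, ← himg, Set.ncard_image_of_injOn hinj]
end

section
/- For all natural numbers p, q, r with |p - q| ≤ r ≤ p + q, the multiplicity satisfies the unified formula E_{p,q}^r = ⌊min(r - |p - q|, p + q - r)/2⌋ + 1; equivalently, E_{p,q}^r equals the integer part of the tangent length from the vertex opposite the largest side of the triangle with sides p, q, r to the incircle, plus one. -/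
/-- the unified formula
    `E_{p,q}^r = ⌊min(r - |p - q|, p + q - r)/2⌋ + 1` under the triangle
    inequalities. -/
theorem stmt_10 (p q r : ℕ)
    (h1 : ((p : ℤ) - (q : ℤ)).natAbs ≤ r) (h2 : r ≤ p + q) :
    Emult p q r = min (r - ((p : ℤ) - (q : ℤ)).natAbs) (p + q - r) / 2 + 1 := by
  set m : ℕ := max (p - r) (q - r) with hm
  set M : ℕ := (p + q - r) / 2 with hM
  have hmM : m ≤ M := by omega
  set f : ℕ → ℕ × ℕ × ℕ × ℕ := fun u => (p + q - r - 2 * u, u, u + r - q, u + r - p)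
    with hf
  have hset : {t : ℕ × ℕ × ℕ × ℕ |
      t.1 + t.2.2.1 + t.2.2.2 = r ∧
      t.2.2.1 + t.1 + t.2.1 = p ∧
      t.2.2.2 + t.2.1 + t.1 = q} = ↑((Finset.Icc m M).image f) := by
    ext ⟨T, U, L, R⟩
    simp only [Set.mem_setOf_eq, Finset.coe_image, Set.mem_image, Finset.mem_coe,
      Finset.mem_Icc, hf]
    constructor
    · rintro ⟨e1, e2, e3⟩
      refine ⟨U, ⟨by omega, by omega⟩, ?_⟩
      simp only [Prod.mk.injEq, true_and, and_true]
      omega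
    · rintro ⟨u, ⟨hu1, hu2⟩, he⟩
      simp only [Prod.mk.injEq, true_and, and_true] at he
      omega
  have hinj : Set.InjOn f ↑(Finset.Icc m M) := by
    intro a _ b _ hab
    have : (f a).2.1 = (f b).2.1 := by rw [hab]
    simpa [hf] using this
  have : Emult p q r = ((Finset.Icc m M).image f).card := by
    rw [Emult, hset, Set.ncard_coe_finset]
  rw [this, Finset.card_image_of_injOn (by simpa using hinj), Nat.card_Icc]
  omega
end
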